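/- (Addition of upper bounds.) Let R be a commutative ring, let N_1, N_2 ≥ 1 and d ≥ 1 be integers, and let χ_1,…,χ_d : ℤ → R be arbitrary functions. Then ∑_{0<n_1<⋯<n_d<N_1+N_2} χ_1(n_1)⋯χ_d(n_d) = ∑_{j=0}^{d} (∑_{N_1<n_{j+1}<⋯<n_d<N_1+N_2} ∏_{i=j+1}^d χ_i(n_i)) · (∑_{0<n_1<⋯<n_j<N_1} ∏_{i=1}^j χ_i(n_i)) + ∑_{j=1}^{d} (∑_{N_1<n_{j+1}<⋯<n_d<N_1+N_2} ∏_{i=j+1}^d χ_i(n_i)) · χ_j(N_1) · (∑_{0<n_1<⋯<n_{j−1}<N_1} ∏_{i=1}^{j−1} χ_i(n_i)), where an empty multiple sum (over 0 indices) equals 1. -/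

import Mathlib

open Finset

/-- Multiple harmonic sum attached to a list of functions `[χ_1, …, χ_d]` (the head `χ_1` is
paired with the innermost index `n_1`), with fixed upper bound `N` and lower bound `M`:
`hsum N M [χ_1,…,χ_d] = ∑_{M<n_1<⋯<n_d<N} χ_1(n_1)⋯χ_d(n_d)`; for the empty list it is `1`. -/
noncomputable def hsum {R : Type*} [CommRing R] (N : ℤ) : ℤ → List (ℤ → R) → R
  | _, [] => 1
  | M, χ :: t => ∑ n ∈ Finset.Ioo M N, χ n * hsum N n t

lemma swap_helper {R : Type*} [CommRing R] (s : Finset ℤ) {ι : Type*} (u : Finset ι)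
    (χ : ℤ → R) (g : ι → R) (h : ι → ℤ → R) :
    ∑ n ∈ s, χ n * (∑ j ∈ u, g j * h j n) = ∑ j ∈ u, g j * ∑ n ∈ s, χ n * h j n := by
  simp only [Finset.mul_sum]
  rw [Finset.sum_comm]
  exact Finset.sum_congr rfl fun j _ => Finset.sum_congr rfl fun n _ => by ring

theorem key {R : Type*} [CommRing R] (N N₁ : ℤ) (hN : N₁ < N) :
    ∀ (L : List (ℤ → R)) (M : ℤ), M < N₁ →
    hsum N M L = (∑ j ∈ Finset.range (L.length + 1),
          hsum N N₁ (L.drop j) * hsum N₁ M (L.take j))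
      + ∑ j : Fin L.length,
          hsum N N₁ (L.drop ((j : ℕ) + 1)) * L.get j N₁ * hsum N₁ M (L.take (j : ℕ)) := by
  intro L
  induction L with
  | nil => intro M hM; simp [hsum]
  | cons χ t ih =>
    intro M hM
    have hdisj : Disjoint (Finset.Ioc M N₁) (Finset.Ioo N₁ N) := by
      rw [Finset.disjoint_left]
      intro a ha hb
      simp only [Finset.mem_Ioc, Finset.mem_Ioo] at ha hb
      omega
    have hunion : Finset.Ioc M N₁ ∪ Finset.Ioo N₁ N = Finset.Ioo M N := by
      ext a
      simp only [Finset.mem_union, Finset.mem_Ioc, Finset.mem_Ioo]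
      omega
    have hins : insert N₁ (Finset.Ioo M N₁) = Finset.Ioc M N₁ :=
      Finset.Ioo_insert_right hM
    have hnm : N₁ ∉ Finset.Ioo M N₁ := by simp
    have lhs_eq : hsum N M (χ :: t)
        = (∑ n ∈ Finset.Ioo M N₁, χ n * hsum N n t)
          + χ N₁ * hsum N N₁ t + hsum N N₁ (χ :: t) := by
      show (∑ n ∈ Finset.Ioo M N, χ n * hsum N n t) = _
      rw [← hunion, Finset.sum_union hdisj, ← hins, Finset.sum_insert hnm]
      show _ = _ + _ + (∑ n ∈ Finset.Ioo N₁ N, χ n * hsum N n t)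
      ring
    rw [lhs_eq]
    -- rewrite inner sums with IH
    have hinner : ∀ n ∈ Finset.Ioo M N₁, χ n * hsum N n t
        = χ n * ((∑ j ∈ Finset.range (t.length + 1),
              hsum N N₁ (t.drop j) * hsum N₁ n (t.take j))
          + ∑ j : Fin t.length,
              hsum N N₁ (t.drop ((j : ℕ) + 1)) * t.get j N₁ * hsum N₁ n (t.take (j : ℕ))) := by
      intro n hn
      rw [← ih n (Finset.mem_Ioo.mp hn).2]
    rw [Finset.sum_congr rfl hinner]
    simp only [mul_add, Finset.sum_add_distrib]
    rw [swap_helper (Finset.Ioo M N₁) (Finset.range (t.length + 1)) χ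
        (fun j => hsum N N₁ (t.drop j)) (fun j n => hsum N₁ n (t.take j))]
    rw [swap_helper (Finset.Ioo M N₁) (Finset.univ : Finset (Fin t.length)) χ
        (fun j => hsum N N₁ (t.drop ((j : ℕ) + 1)) * t.get j N₁)
        (fun j n => hsum N₁ n (t.take (j : ℕ)))]
    -- now the RHS of the goal
    have hRseq : ∀ j, hsum N₁ M ((χ :: t).take (j + 1))
        = ∑ n ∈ Finset.Ioo M N₁, χ n * hsum N₁ n (t.take j) := fun j => rfl
    simp only [List.length_cons]
    rw [Finset.sum_range_succ', Fin.sum_univ_succ]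
    simp only [List.drop_succ_cons, List.take_succ_cons, List.take_zero, List.drop_zero,
      List.get_eq_getElem, List.getElem_cons_zero, Fin.val_zero, Fin.val_succ,
      List.getElem_cons_succ, hsum, Fin.coe_eq_castSucc]
    rw [Finset.sum_range_succ', Finset.sum_range_succ']
    simp only [List.drop_succ_cons, List.take_succ_cons, List.take_zero, List.drop_zero,
      hsum, mul_one, List.getElem_cons_zero]
    ring_nf
    rfl

/-- Addition of upper bounds:
`H_{0<N₁+N₂}(χ_d,…,χ_1) = ∑_{j=0}^d H_{N₁<N₁+N₂}(χ_d,…,χ_{j+1})·H_{0<N₁}(χ_j,…,χ_1)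
 + ∑_{j=1}^d H_{N₁<N₁+N₂}(χ_d,…,χ_{j+1})·χ_j(N₁)·H_{0<N₁}(χ_{j−1},…,χ_1)`
(in the second sum, `j` is represented `0`-based by `j : Fin L.length`, so `χ_j = L.get j`). -/
theorem mhs_addition {R : Type*} [CommRing R] (N₁ N₂ : ℤ) (h1 : 1 ≤ N₁) (h2 : 1 ≤ N₂)
    (L : List (ℤ → R)) (hL : 1 ≤ L.length) :
    hsum (N₁ + N₂) 0 L
      = (∑ j ∈ Finset.range (L.length + 1),
            hsum (N₁ + N₂) N₁ (L.drop j) * hsum N₁ 0 (L.take j))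
        + ∑ j : Fin L.length,
            hsum (N₁ + N₂) N₁ (L.drop ((j : ℕ) + 1)) * L.get j N₁ *
              hsum N₁ 0 (L.take (j : ℕ)) :=
  key (N₁ + N₂) N₁ (by linarith) L 0 (by linarith)
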